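/- Let n ≥ 1 and write (t+1)^n = t^n + Σ_{i=0}^{n−1} α_i t^i in k[t], and set γ_i = Σ_{j=0}^{i} α_j for 0 ≤ i ≤ n−1 (so γ₀ = α₀ = 1). In the kV₄-module E_{t+1,n}, the submodule ker(a) + ker(a+b) + ker(b) equals the k-span of {v₀, …, v_{n−1}} ∪ {Σ_{i=0}^{n−1} γ_i u_i}; in fact ker(a) = ker(b) = span_k{v₀,…,v_{n−1}} and ker(a+b) = span_k({v₀,…,v_{n−1}} ∪ {Σ_{i=0}^{n−1} γ_i u_i}). Here ker(c) denotes the kernel of the k-linear endomorphism given by the action of c ∈ kV₄. -/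

import Mathlib

open Multiplicative

/-! ## The Klein four-group and its group algebra -/

/-- The Klein four-group `V₄ = ⟨σ, τ⟩`. -/
abbrev V4 : Type := Multiplicative (ZMod 2) × Multiplicative (ZMod 2)

/-- The group algebra `kV₄`. -/
abbrev kV4 (k : Type) [Field k] : Type := MonoidAlgebra k V4

/-- The generator `σ` of `V₄`. -/
def sigma4 : V4 := (ofAdd 1, 1)

/-- The generator `τ` of `V₄`. -/
def tau4 : V4 := (1, ofAdd 1)

/-- The element `a = σ + 1` of `kV₄` (in characteristic 2, `σ + 1 = σ - 1`). -/
noncomputable def aElt (k : Type) [Field k] : kV4 k := MonoidAlgebra.of k V4 sigma4 + 1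

/-- The element `b = τ + 1` of `kV₄`. -/
noncomputable def bElt (k : Type) [Field k] : kV4 k := MonoidAlgebra.of k V4 tau4 + 1

/-! ## Building representations of `V₄` -/

/-- A monoid hom out of `Multiplicative (ZMod 2)` determined by an involution. -/
noncomputable def involHom {M : Type} [Monoid M] (S : M) (hS : S * S = 1) :
    Multiplicative (ZMod 2) →* M where
  toFun g := S ^ (toAdd g).val
  map_one' := by simp
  map_mul' x y := by
    have h2 : S ^ 2 = 1 := by rwa [pow_two]
    have key : ∀ m : ℕ, S ^ (m % 2) = S ^ m := by
      intro m
      conv_rhs => rw [← Nat.div_add_mod m 2]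
      rw [pow_add, pow_mul, h2, one_pow, one_mul]
    show S ^ (toAdd (x * y)).val = S ^ (toAdd x).val * S ^ (toAdd y).val
    rw [toAdd_mul, ZMod.val_add, key, pow_add]

/-- The representation of `V₄` determined by two commuting involutions `S` (the action
of `σ`) and `T` (the action of `τ`). -/
noncomputable def kleinRep (k : Type) [Field k] {V : Type} [AddCommGroup V] [Module k V]
    (S T : Module.End k V) (hS : S * S = 1) (hT : T * T = 1) (hST : S * T = T * S) :
    Representation k V4 V :=
  MonoidHom.noncommCoprod (involHom S hS) (involHom T hT)
    (fun _ _ => Commute.pow_pow (show Commute S T from hST) _ _)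

section Pair

variable (k : Type) [Field k]

/-- The endomorphism `(u, v) ↦ (0, f u)` of `(I → k) × (J → k)`. -/
noncomputable def auxEnd {I J : Type} (f : (I → k) →ₗ[k] (J → k)) :
    Module.End k ((I → k) × (J → k)) :=
  (LinearMap.inr k (I → k) (J → k)).comp (f.comp (LinearMap.fst k (I → k) (J → k)))

lemma auxEnd_mul {I J : Type} (f g : (I → k) →ₗ[k] (J → k)) :
    auxEnd k f * auxEnd k g = 0 := by
  apply LinearMap.ext
  intro x
  simp [auxEnd, Module.End.mul_apply]

lemma end_add_self {V : Type} [AddCommGroup V] [Module k V] [CharP k 2]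
    (A : Module.End k V) : A + A = 0 := by
  rw [← two_smul k A]
  have h2 : (2 : k) = 0 := by exact_mod_cast CharP.cast_eq_zero k 2
  rw [h2, zero_smul]

lemma one_add_sq [CharP k 2] {V : Type} [AddCommGroup V] [Module k V]
    (A : Module.End k V) (hA : A * A = 0) : (1 + A) * (1 + A) = 1 := by
  have h : (1 + A) * (1 + A) = 1 + (A + A) + A * A := by noncomm_ring
  rw [h, end_add_self, hA, add_zero, add_zero]

lemma one_add_comm {V : Type} [AddCommGroup V] [Module k V]
    (A B : Module.End k V) (hAB : A * B = 0) (hBA : B * A = 0) :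
    (1 + A) * (1 + B) = (1 + B) * (1 + A) := by
  have h1 : (1 + A) * (1 + B) = 1 + A + B + A * B := by noncomm_ring
  have h2 : (1 + B) * (1 + A) = 1 + A + B + B * A := by noncomm_ring
  rw [h1, h2, hAB, hBA]

/-- The representation of `V₄` on `(I → k) × (J → k)` (`I` indexing the `u`-basis and
`J` the `v`-basis) on which `a` acts by `(u, v) ↦ (0, f u)` and `b` acts by
`(u, v) ↦ (0, g u)`; equivalently `σ = 1 + a`, `τ = 1 + b`. -/
noncomputable def pairRep [CharP k 2] (I J : Type) (f g : (I → k) →ₗ[k] (J → k)) :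
    Representation k V4 ((I → k) × (J → k)) :=
  kleinRep k (1 + auxEnd k f) (1 + auxEnd k g)
    (one_add_sq k _ (auxEnd_mul k f f)) (one_add_sq k _ (auxEnd_mul k g g))
    (one_add_comm k _ _ (auxEnd_mul k f g) (auxEnd_mul k g f))

end Pair

/-! ## The indecomposable `kV₄`-modules -/

section Modules

variable (k : Type) [Field k] [CharP k 2]

/-- `a`-action for `M_{2n+1}`: `a • u_i = v_{i-1}` for `1 ≤ i ≤ n`; here `u_{i+1}` is
indexed by `i : Fin n` and `v_j` by `j : Fin (n+1)`. -/
noncomputable def MaMap (n : ℕ) : (Fin n → k) →ₗ[k] (Fin (n + 1) → k) :=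
  LinearMap.pi fun j =>
    if h : (j : ℕ) < n then LinearMap.proj (⟨(j : ℕ), h⟩ : Fin n) else 0

/-- `b`-action for `M_{2n+1}`: `b • u_i = v_i` for `1 ≤ i ≤ n`. -/
noncomputable def MbMap (n : ℕ) : (Fin n → k) →ₗ[k] (Fin (n + 1) → k) :=
  LinearMap.pi fun j =>
    if _ : (j : ℕ) = 0 then 0
    else LinearMap.proj (⟨(j : ℕ) - 1, by have := j.isLt; omega⟩ : Fin n)

/-- The representation `M_{2n+1}`. -/
noncomputable def MRep (n : ℕ) : Representation k V4 ((Fin n → k) × (Fin (n + 1) → k)) :=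
  pairRep k (Fin n) (Fin (n + 1)) (MaMap k n) (MbMap k n)

/-- The `kV₄`-module `M_{2n+1}`. -/
@[reducible] noncomputable def Mmod (n : ℕ) := (MRep k n).asModule

/-- `a`-action for `W_{2n+1}`: `a • u_i = v_i` for `1 ≤ i ≤ n`, `a • u_0 = 0`; here `u_i`
is indexed by `i : Fin (n+1)` and `v_{j+1}` by `j : Fin n`. -/
noncomputable def WaMap (n : ℕ) : (Fin (n + 1) → k) →ₗ[k] (Fin n → k) :=
  LinearMap.pi fun j =>
    LinearMap.proj (⟨(j : ℕ) + 1, by have := j.isLt; omega⟩ : Fin (n + 1))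

/-- `b`-action for `W_{2n+1}`: `b • u_i = v_{i+1}` for `0 ≤ i ≤ n-1`, `b • u_n = 0`. -/
noncomputable def WbMap (n : ℕ) : (Fin (n + 1) → k) →ₗ[k] (Fin n → k) :=
  LinearMap.pi fun j =>
    LinearMap.proj (⟨(j : ℕ), by have := j.isLt; omega⟩ : Fin (n + 1))

/-- The representation `W_{2n+1}`. -/
noncomputable def WRep (n : ℕ) : Representation k V4 ((Fin (n + 1) → k) × (Fin n → k)) :=
  pairRep k (Fin (n + 1)) (Fin n) (WaMap k n) (WbMap k n)

/-- The `kV₄`-module `W_{2n+1}`. -/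
@[reducible] noncomputable def Wmod (n : ℕ) := (WRep k n).asModule

/-- `b`-action for `E_{f,n}` with `f ≠ ∞`, where `m = n·deg f` and `α` is the list of lower
coefficients of `f^n`: `b • u_i = v_{i+1}` for `i ≤ m-2` and `b • u_{m-1} = Σ α_i v_i`. -/
noncomputable def EbMap (m : ℕ) (α : Fin m → k) : (Fin m → k) →ₗ[k] (Fin m → k) :=
  LinearMap.pi fun j =>
    (if _ : (j : ℕ) = 0 then 0
     else LinearMap.proj (⟨(j : ℕ) - 1, by have := j.isLt; omega⟩ : Fin m))
    + α j • LinearMap.proj (⟨m - 1, by have := j.isLt; omega⟩ : Fin m)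

/-- The representation `E_{f,n}` (for `f ≠ ∞`), where `a • u_i = v_i`. -/
noncomputable def ERep (m : ℕ) (α : Fin m → k) : Representation k V4 ((Fin m → k) × (Fin m → k)) :=
  pairRep k (Fin m) (Fin m) LinearMap.id (EbMap k m α)

/-- The `kV₄`-module `E_{f,n}` (for `f ≠ ∞`), presented by the coefficient vector `α` of
`f^n` below its leading term, with `m = n·deg f`. -/
@[reducible] noncomputable def Emod (m : ℕ) (α : Fin m → k) := (ERep k m α).asModule

/-- `a`-action for `E_{∞,n}`: `a • u_i = v_{i-1}` for `1 ≤ i ≤ n-1`, `a • u_0 = 0`. -/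
noncomputable def EinfaMap (n : ℕ) : (Fin n → k) →ₗ[k] (Fin n → k) :=
  LinearMap.pi fun j =>
    if h : (j : ℕ) + 1 < n then LinearMap.proj (⟨(j : ℕ) + 1, h⟩ : Fin n) else 0

/-- The representation `E_{∞,n}`, where `b • u_i = v_i`. -/
noncomputable def EinfRep (n : ℕ) : Representation k V4 ((Fin n → k) × (Fin n → k)) :=
  pairRep k (Fin n) (Fin n) (EinfaMap k n) LinearMap.id

/-- The `kV₄`-module `E_{∞,n}`. -/
@[reducible] noncomputable def Einfmod (n : ℕ) := (EinfRep k n).asModule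

/-- The trivial `kV₄`-module `k`. -/
@[reducible] noncomputable def trivMod := (Representation.trivial k (G := V4) (V := k)).asModule

/-- The `kV₄`-module `E_t = E_{t,1}`. -/
@[reducible] noncomputable def EtMod := Emod k 1 0

/-- The `kV₄`-module `E_{t+1} = E_{t+1,1}`. -/
@[reducible] noncomputable def Et1Mod := Emod k 1 1

/-- The `kV₄`-module `E_∞ = E_{∞,1}`. -/
@[reducible] noncomputable def EinfMod := Einfmod k 1

end Modules

/-! ## Permutation modules, resolutions and the permutation dimension -/

section Perm

variable (k : Type) [Field k]

/-- A `kV₄`-module is a permutation module if it is isomorphic to `k[X]` for some finite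
`V₄`-set `X` (equivalently, it admits a finite `k`-basis permuted by `V₄`). -/
def IsPermMod (M : Type) [AddCommMonoid M] [Module (kV4 k) M] : Prop :=
  ∃ (ι : Type) (_ : Fintype ι) (act : MulAction V4 ι),
    Nonempty (M ≃ₗ[kV4 k] (@Representation.ofMulAction k _ V4 _ ι act).asModule)

/-- A permutation resolution `0 → P_n → ⋯ → P_1 → P_0 → M → 0` of length at most `n`:
an exact sequence of `kV₄`-modules in which every `P_i` is a permutation module and
`P_i = 0` for `i > n`. -/
structure PermRes (M : Type) [AddCommMonoid M] [Module (kV4 k) M] (n : ℕ) where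
  P : ℕ → Type
  [acm : ∀ i, AddCommMonoid (P i)]
  [mod : ∀ i, Module (kV4 k) (P i)]
  d : ∀ i, P (i + 1) →ₗ[kV4 k] P i
  ε : P 0 →ₗ[kV4 k] M
  perm : ∀ i, IsPermMod k (P i)
  surj : Function.Surjective ε
  exact_zero : LinearMap.ker ε = LinearMap.range (d 0)
  exact_succ : ∀ i, LinearMap.ker (d i) = LinearMap.range (d (i + 1))
  bounded : ∀ i, n < i → ∀ x : P i, x = 0

/-- The permutation dimension of a `kV₄`-module: the least length of a permutation
resolution. -/
noncomputable def ppdim (M : Type) [AddCommMonoid M] [Module (kV4 k) M] : ℕ :=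
  sInf {n : ℕ | Nonempty (PermRes k M n)}

/-- `SES k A B C` asserts the existence of a short exact sequence
`0 → A → B → C → 0` of `kV₄`-modules. -/
def SES (A B C : Type) [AddCommMonoid A] [AddCommMonoid B] [AddCommMonoid C]
    [Module (kV4 k) A] [Module (kV4 k) B] [Module (kV4 k) C] : Prop :=
  ∃ (f : A →ₗ[kV4 k] B) (g : B →ₗ[kV4 k] C),
    Function.Injective f ∧ Function.Surjective g ∧ LinearMap.range f = LinearMap.ker g

end Perm

/-- A nonzero module is indecomposable if it is not the (internal) direct sum of two
nonzero submodules. -/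
def IsIndecomposable (R M : Type) [Ring R] [AddCommMonoid M] [Module R M] : Prop :=
  Nontrivial M ∧ ∀ N₁ N₂ : Submodule R M, IsCompl N₁ N₂ → N₁ = ⊥ ∨ N₂ = ⊥

/-- A `kV₄`-module is projective-free if it has no direct summand isomorphic to the
regular module `kV₄`. -/
def IsProjFree (k : Type) [Field k] (M : Type) [AddCommMonoid M] [Module (kV4 k) M] : Prop :=
  ¬ ∃ (N N' : Submodule (kV4 k) M), IsCompl N N' ∧ Nonempty (N ≃ₗ[kV4 k] kV4 k)


/-! ## Statement -/

-- Basis vectors for the kernel statements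
section KerVecs

variable (k : Type) [Field k]

/-- The basis vector `u_i` of a pair module. -/
noncomputable def uVec {I J : Type} [DecidableEq I] (i : I) : (I → k) × (J → k) :=
  (Pi.single i 1, 0)

/-- The basis vector `v_j` of a pair module. -/
noncomputable def vVec {I J : Type} [DecidableEq J] (j : J) : (I → k) × (J → k) :=
  (0, Pi.single j 1)

end KerVecs

section Aux
variable (k : Type) [Field k] [CharP k 2]

lemma pairRep_sigma {I J : Type} (f g : (I → k) →ₗ[k] (J → k)) :
    pairRep k I J f g sigma4 = 1 + auxEnd k f := by
  have : (toAdd (ofAdd (1 : ZMod 2))).val = 1 := rfl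
  simp [pairRep, kleinRep, sigma4, MonoidHom.noncommCoprod_apply, involHom, this, ZMod.val_one]

lemma pairRep_tau {I J : Type} (f g : (I → k) →ₗ[k] (J → k)) :
    pairRep k I J f g tau4 = 1 + auxEnd k g := by
  have : (toAdd (ofAdd (1 : ZMod 2))).val = 1 := rfl
  simp [pairRep, kleinRep, tau4, MonoidHom.noncommCoprod_apply, involHom, this, ZMod.val_one]

end Aux
section Aux2
variable (k : Type) [Field k] [CharP k 2]

lemma pairRep_aElt {I J : Type} (f g : (I → k) →ₗ[k] (J → k)) :
    (pairRep k I J f g).asAlgebraHom (aElt k) = auxEnd k f := by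
  have h1 : (pairRep k I J f g).asAlgebraHom (MonoidAlgebra.of k V4 sigma4)
      = pairRep k I J f g sigma4 := by
    rw [MonoidAlgebra.of_apply, Representation.asAlgebraHom_single, one_smul]
  rw [aElt, map_add, map_one, h1, pairRep_sigma]
  have := end_add_self k (1 : Module.End k ((I → k) × (J → k)))
  rw [add_assoc]
  rw [add_comm (auxEnd k f)]
  rw [← add_assoc, this, zero_add]

lemma pairRep_bElt {I J : Type} (f g : (I → k) →ₗ[k] (J → k)) :
    (pairRep k I J f g).asAlgebraHom (bElt k) = auxEnd k g := by
  have h1 : (pairRep k I J f g).asAlgebraHom (MonoidAlgebra.of k V4 tau4)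
      = pairRep k I J f g tau4 := by
    rw [MonoidAlgebra.of_apply, Representation.asAlgebraHom_single, one_smul]
  rw [bElt, map_add, map_one, h1, pairRep_tau]
  have := end_add_self k (1 : Module.End k ((I → k) × (J → k)))
  rw [add_assoc, add_comm (auxEnd k g), ← add_assoc, this, zero_add]

end Aux2
section Aux3
variable (k : Type) [Field k] [CharP k 2]

lemma char2_add_self (x : k) : x + x = 0 := by
  have : (2 : k) = 0 := by exact_mod_cast CharP.cast_eq_zero k 2
  rw [← two_mul, this, zero_mul]

lemma span_vVec (m : ℕ) :
    Submodule.span k (Set.range (vVec k (I := Fin m) (J := Fin m)))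
      = Submodule.prod ⊥ ⊤ := by
  apply le_antisymm
  · rw [Submodule.span_le]
    rintro _ ⟨j, rfl⟩
    exact ⟨rfl, trivial⟩
  · rintro ⟨u, v⟩ ⟨hu, -⟩
    simp only [Submodule.mem_bot] at hu
    subst hu
    have : ((0 : Fin m → k), v) = ∑ j : Fin m, v j • vVec k (I := Fin m) j := by
      ext i
      · simp [vVec, Prod.fst_sum]
      · simp [vVec, Prod.snd_sum, Pi.single_apply, Finset.sum_ite_eq', mul_comm]
    rw [this]
    exact Submodule.sum_mem _ fun j _ =>
      Submodule.smul_mem _ _ (Submodule.subset_span ⟨j, rfl⟩)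

lemma auxEnd_apply {I J : Type} (f : (I → k) →ₗ[k] (J → k)) (p : (I → k) × (J → k)) :
    auxEnd k f p = (0, f p.1) := rfl

lemma EbMap_apply (m : ℕ) (α : Fin m → k) (u : Fin m → k) (j : Fin m) :
    EbMap k m α u j
      = (if h : (j : ℕ) = 0 then 0 else u ⟨(j : ℕ) - 1, by have := j.isLt; omega⟩)
        + α j * u ⟨m - 1, by have := j.isLt; omega⟩ := by
  simp only [EbMap, LinearMap.pi_apply, LinearMap.add_apply, LinearMap.smul_apply,
    smul_eq_mul]
  split <;> simp [LinearMap.proj_apply]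

end Aux3
section Aux4
variable (k : Type) [Field k] [CharP k 2]

lemma beta_zero (n : ℕ) : ((Polynomial.X + 1 : Polynomial k) ^ n).coeff 0 = 1 := by
  rw [Polynomial.coeff_zero_eq_eval_zero]
  simp

lemma beta_sum (n : ℕ) (hn : 1 ≤ n) :
    ∑ j ∈ Finset.range n, ((Polynomial.X + 1 : Polynomial k) ^ n).coeff j = 1 := by
  have h2 : (1 : k) + 1 = 0 := by
    have : (2 : k) = 0 := by exact_mod_cast CharP.cast_eq_zero k 2
    linear_combination this
  have hmonic : ((Polynomial.X + 1 : Polynomial k) ^ n).Monic :=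
    (Polynomial.monic_X_add_C 1).pow n
  have hdeg : ((Polynomial.X + 1 : Polynomial k) ^ n).natDegree = n := by
    have h1 : (Polynomial.X + 1 : Polynomial k).natDegree = 1 := by
      simpa using Polynomial.natDegree_X_add_C (1 : k)
    rw [Polynomial.natDegree_pow, h1, mul_one]
  have heval : ((Polynomial.X + 1 : Polynomial k) ^ n).eval 1 = 0 := by
    rw [Polynomial.eval_pow, Polynomial.eval_add, Polynomial.eval_X, Polynomial.eval_one,
      h2, zero_pow (by omega : n ≠ 0)]
  have := Polynomial.eval_eq_sum_range
    (x := (1 : k)) (p := (Polynomial.X + 1 : Polynomial k) ^ n)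
  rw [hdeg, heval, Finset.sum_range_succ] at this
  simp only [one_pow, mul_one] at this
  have hlead : ((Polynomial.X + 1 : Polynomial k) ^ n).coeff n = 1 := by
    have := hmonic
    rwa [Polynomial.Monic, Polynomial.leadingCoeff, hdeg] at this
  rw [hlead] at this
  linear_combination -this - h2

end Aux4
section Aux5
variable (k : Type) [Field k] [CharP k 2]

lemma char2_eq_of_add_eq_zero (x y : k) (h : x + y = 0) : x = y := by
  linear_combination h - char2_add_self k y

lemma EbMap_inj (n : ℕ) (hn : 1 ≤ n) (β : ℕ → k) (hβ0 : β 0 = 1)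
    (u : Fin n → k) (h : EbMap k n (fun i => β i) u = 0) : u = 0 := by
  have hlast : u ⟨n - 1, by omega⟩ = 0 := by
    have := congrFun h ⟨0, by omega⟩
    rw [EbMap_apply] at this
    simpa [hβ0] using this
  funext i
  by_cases hi : (i : ℕ) = n - 1
  · have : i = ⟨n - 1, by omega⟩ := Fin.ext hi
    rw [this]; exact hlast
  · have hlt : (i : ℕ) + 1 < n := by have := i.isLt; omega
    have := congrFun h ⟨(i : ℕ) + 1, hlt⟩
    rw [EbMap_apply] at this
    simp only [Nat.add_sub_cancel, hlast, mul_zero, add_zero, Pi.zero_apply] at this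
    simpa using this

lemma ker_id_add_EbMap (n : ℕ) (hn : 1 ≤ n) (β : ℕ → k) (hβ0 : β 0 = 1)
    (hβsum : ∑ j ∈ Finset.range n, β j = 1) (u : Fin n → k) :
    u + EbMap k n (fun i => β i) u = 0 ↔
      u = u ⟨n - 1, by omega⟩ • fun i : Fin n => ∑ j ∈ Finset.range ((i : ℕ) + 1), β j := by
  set γ : ℕ → k := fun i => ∑ j ∈ Finset.range (i + 1), β j with hγ
  have hγ0 : γ 0 = 1 := by simp [hγ, hβ0]
  have hγlast : γ (n - 1) = 1 := by
    show ∑ j ∈ Finset.range (n - 1 + 1), β j = 1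
    rw [(by omega : n - 1 + 1 = n)]; exact hβsum
  have hγrec : ∀ i : ℕ, γ (i + 1) = γ i + β (i + 1) := by
    intro i; simp [hγ, Finset.sum_range_succ]
  set c := u ⟨n - 1, by omega⟩ with hc
  constructor
  · intro h
    have key : ∀ d : ℕ, ∀ i : Fin n, (i : ℕ) = n - 1 - d → u i = c * γ (i : ℕ) := by
      intro d
      induction d with
      | zero =>
        intro i hi
        simp only [Nat.sub_zero] at hi
        have h1 : u i = c := by rw [hc]; congr 1; exact Fin.ext hi
        rw [h1, hi, hγlast, mul_one]
      | succ d ih =>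
        intro i hi
        by_cases hd : n - 1 - (d + 1) = n - 1 - d
        · exact ih i (by omega)
        · have hlt : (i : ℕ) + 1 < n := by omega
          have hj : ((⟨(i : ℕ) + 1, hlt⟩ : Fin n) : ℕ) = n - 1 - d := by
            show (i : ℕ) + 1 = n - 1 - d; omega
          have h1 := congrFun h ⟨(i : ℕ) + 1, hlt⟩
          rw [Pi.add_apply, EbMap_apply] at h1
          simp only [Nat.add_sub_cancel, Pi.zero_apply] at h1
          rw [dif_neg (by omega)] at h1
          have h2 : u ⟨(i : ℕ) + 1, hlt⟩ = c * γ ((i : ℕ) + 1) := ih _ hj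
          have h3 : (Fin.mk (i : ℕ) (by omega : (i:ℕ) < n)) = i := rfl
          rw [h3, h2, ← hc] at h1
          -- h1 : c * γ (i+1) + (u i + β (i+1) * c) = 0
          have h4 : u i = c * γ ((i : ℕ) + 1) + β ((i : ℕ) + 1) * c := by
            linear_combination char2_add_self k (u i) - h1
          rw [h4]
          linear_combination c * (hγrec (i : ℕ))
            + char2_add_self k (β ((i : ℕ) + 1) * c)
    funext i
    exact key (n - 1 - (i : ℕ)) i (by have := i.isLt; omega)
  · intro h
    funext j
    rw [Pi.add_apply, EbMap_apply, Pi.zero_apply]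
    have happ : ∀ (m : ℕ) (hm : m < n), u ⟨m, hm⟩ = c * γ m := by
      intro m hm
      rw [h]
      simp only [Pi.smul_apply, smul_eq_mul]
      rfl
    have hlastval : u ⟨n - 1, by omega⟩ = c := rfl
    rw [hlastval, happ j.1 j.isLt]
    by_cases hj : (j : ℕ) = 0
    · rw [dif_pos hj, hj, hγ0, hβ0, mul_one, zero_add, one_mul]
      exact char2_add_self k c
    · rw [dif_neg hj, happ]
      have hrec : γ (j : ℕ) = γ ((j : ℕ) - 1) + β (j : ℕ) := by
        have := hγrec ((j : ℕ) - 1)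
        rwa [(by omega : (j : ℕ) - 1 + 1 = (j : ℕ))] at this
      rw [hrec]
      linear_combination char2_add_self k (c * γ ((j : ℕ) - 1))
        + char2_add_self k (c * β (j : ℕ))

end Aux5
-- STATEMENT 18
theorem stmt18 (k : Type) [Field k] [CharP k 2] (n : ℕ) (hn : 1 ≤ n) :
    (LinearMap.ker ((ERep k n
        (fun i => ((Polynomial.X + 1 : Polynomial k) ^ n).coeff i)).asAlgebraHom (aElt k))
      = Submodule.span k (Set.range (vVec k (I := Fin n) (J := Fin n)))) ∧
    (LinearMap.ker ((ERep k n
        (fun i => ((Polynomial.X + 1 : Polynomial k) ^ n).coeff i)).asAlgebraHom (bElt k))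
      = Submodule.span k (Set.range (vVec k (I := Fin n) (J := Fin n)))) ∧
    (LinearMap.ker ((ERep k n
        (fun i => ((Polynomial.X + 1 : Polynomial k) ^ n).coeff i)).asAlgebraHom
          (aElt k + bElt k))
      = Submodule.span k
          (Set.range (vVec k (I := Fin n) (J := Fin n)) ∪
            {∑ i : Fin n,
              (∑ j ∈ Finset.range ((i : ℕ) + 1),
                ((Polynomial.X + 1 : Polynomial k) ^ n).coeff j) • uVec k (J := Fin n) i})) ∧
    (LinearMap.ker ((ERep k n
        (fun i => ((Polynomial.X + 1 : Polynomial k) ^ n).coeff i)).asAlgebraHom (aElt k)) ⊔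
     LinearMap.ker ((ERep k n
        (fun i => ((Polynomial.X + 1 : Polynomial k) ^ n).coeff i)).asAlgebraHom
          (aElt k + bElt k)) ⊔
     LinearMap.ker ((ERep k n
        (fun i => ((Polynomial.X + 1 : Polynomial k) ^ n).coeff i)).asAlgebraHom (bElt k))
      = Submodule.span k
          (Set.range (vVec k (I := Fin n) (J := Fin n)) ∪
            {∑ i : Fin n,
              (∑ j ∈ Finset.range ((i : ℕ) + 1),
                ((Polynomial.X + 1 : Polynomial k) ^ n).coeff j) • uVec k (J := Fin n) i})) := by
  have hnpos : 0 < n := hn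
  set β : ℕ → k := fun j => ((Polynomial.X + 1 : Polynomial k) ^ n).coeff j with hβ
  have hβ0 : β 0 = 1 := beta_zero k n
  have hβsum : ∑ j ∈ Finset.range n, β j = 1 := beta_sum k n hn
  set γf : Fin n → k := fun i : Fin n => ∑ j ∈ Finset.range ((i : ℕ) + 1), β j with hγf
  have hrep : ERep k n (fun i => β (i : ℕ))
      = pairRep k (Fin n) (Fin n) LinearMap.id (EbMap k n (fun i => β (i : ℕ))) := rfl
  have hA : (ERep k n (fun i => β (i : ℕ))).asAlgebraHom (aElt k)
      = auxEnd k LinearMap.id := by rw [hrep]; exact pairRep_aElt k _ _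
  have hB : (ERep k n (fun i => β (i : ℕ))).asAlgebraHom (bElt k)
      = auxEnd k (EbMap k n (fun i => β (i : ℕ))) := by rw [hrep]; exact pairRep_bElt k _ _
  have hAB : (ERep k n (fun i => β (i : ℕ))).asAlgebraHom (aElt k + bElt k)
      = auxEnd k LinearMap.id + auxEnd k (EbMap k n (fun i => β (i : ℕ))) := by
    rw [map_add, hA, hB]
  -- the special vector w
  set w : (Fin n → k) × (Fin n → k) :=
    ∑ i : Fin n, (∑ j ∈ Finset.range ((i : ℕ) + 1), β j) • uVec k (J := Fin n) i with hwdef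
  have hw : w = (γf, 0) := by
    rw [hwdef]
    ext i
    · simp [uVec, Prod.fst_sum, Pi.single_apply, Finset.sum_ite_eq', hγf, mul_comm]
    · simp [uVec, Prod.snd_sum]
  have hγflast : γf ⟨n - 1, by omega⟩ = 1 := by
    show ∑ j ∈ Finset.range (n - 1 + 1), β j = 1
    rw [(by omega : n - 1 + 1 = n)]; exact hβsum
  -- Part 1
  have h1 : LinearMap.ker ((ERep k n (fun i => β (i : ℕ))).asAlgebraHom (aElt k))
      = Submodule.span k (Set.range (vVec k (I := Fin n) (J := Fin n))) := by
    rw [span_vVec, hA]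
    ext p
    rw [LinearMap.mem_ker]
    constructor
    · intro hp
      have : ((0 : Fin n → k), p.1) = 0 := hp
      exact ⟨(Prod.ext_iff.mp this).2, trivial⟩
    · rintro ⟨hp, -⟩
      have hp0 : p.1 = 0 := hp
      show ((0 : Fin n → k), p.1) = 0
      rw [hp0]; rfl
  -- Part 2
  have h2 : LinearMap.ker ((ERep k n (fun i => β (i : ℕ))).asAlgebraHom (bElt k))
      = Submodule.span k (Set.range (vVec k (I := Fin n) (J := Fin n))) := by
    rw [span_vVec, hB]
    ext p
    rw [LinearMap.mem_ker]
    constructor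
    · intro hp
      have h0 : ((0 : Fin n → k), EbMap k n (fun i => β (i : ℕ)) p.1) = 0 := hp
      have := EbMap_inj k n hn β hβ0 p.1 (Prod.ext_iff.mp h0).2
      exact ⟨this, trivial⟩
    · rintro ⟨hp, -⟩
      have hp0 : p.1 = 0 := hp
      show ((0 : Fin n → k), EbMap k n (fun i => β (i : ℕ)) p.1) = 0
      rw [hp0, map_zero]; rfl
  -- Part 3
  have hker3 : ∀ p : (Fin n → k) × (Fin n → k),
      p ∈ LinearMap.ker ((ERep k n (fun i => β (i : ℕ))).asAlgebraHom (aElt k + bElt k))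
        ↔ p.1 = p.1 ⟨n - 1, by omega⟩ • γf := by
    intro p
    rw [LinearMap.mem_ker, hAB]
    have : ((auxEnd k LinearMap.id + auxEnd k (EbMap k n (fun i => β (i : ℕ)))
          : Module.End k ((Fin n → k) × (Fin n → k)))) p
        = ((0 : Fin n → k), p.1 + EbMap k n (fun i => β (i : ℕ)) p.1) := by
      rw [LinearMap.add_apply, auxEnd_apply, auxEnd_apply]
      ext i <;> simp
    rw [this]
    constructor
    · intro hp
      have := (Prod.ext_iff.mp hp).2
      exact (ker_id_add_EbMap k n hn β hβ0 hβsum p.1).mp this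
    · intro hp
      have := (ker_id_add_EbMap k n hn β hβ0 hβsum p.1).mpr hp
      rw [Prod.ext_iff]
      exact ⟨rfl, this⟩
  have h3 : LinearMap.ker ((ERep k n (fun i => β (i : ℕ))).asAlgebraHom (aElt k + bElt k))
      = Submodule.span k
          (Set.range (vVec k (I := Fin n) (J := Fin n)) ∪ {w}) := by
    apply le_antisymm
    · intro p hp
      have hchar := (hker3 p).mp hp
      set c := p.1 ⟨n - 1, by omega⟩ with hc
      have hdecomp : p = c • w + ((0 : Fin n → k), p.2) := by
        rw [hw]
        ext i
        · simp [hchar, ← hc]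
        · simp
      rw [hdecomp]
      refine Submodule.add_mem _ (Submodule.smul_mem _ _ ?_) ?_
      · exact Submodule.subset_span (Or.inr rfl)
      · apply Submodule.span_mono (Set.subset_union_left)
        rw [span_vVec]
        exact ⟨rfl, trivial⟩
    · rw [Submodule.span_le]
      rintro q (⟨j, rfl⟩ | hq)
      · have : vVec k (I := Fin n) (J := Fin n) j
            ∈ LinearMap.ker ((ERep k n (fun i => β (i : ℕ))).asAlgebraHom (aElt k + bElt k)) := by
          rw [hker3]
          show (0 : Fin n → k) = (0 : Fin n → k) ⟨n - 1, by omega⟩ • γf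
          simp
        exact this
      · simp only [Set.mem_singleton_iff] at hq
        subst hq
        show w ∈ _
        rw [SetLike.mem_coe, hker3, hw]
        show γf = γf ⟨n - 1, by omega⟩ • γf
        rw [hγflast, one_smul]
  -- Part 4
  refine ⟨h1, h2, h3, ?_⟩
  rw [h1, h2, h3]
  have hle : Submodule.span k (Set.range (vVec k (I := Fin n) (J := Fin n)))
      ≤ Submodule.span k (Set.range (vVec k (I := Fin n) (J := Fin n)) ∪ {w}) :=
    Submodule.span_mono Set.subset_union_left
  rw [sup_comm, ← sup_assoc, sup_idem, sup_eq_right.mpr hle]
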